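/- arXiv:1905.01225 — 3 statements merged into one kernel-verified Lean document; each statement's English description precedes it below -/
import Mathlib

section
/- Let $p$ and $q$ be primes with $p \equiv 5 \pmod 8$ and $q \equiv 7 \pmod 8$, and let $\varepsilon_{pq} = a + b\sqrt{pq}$ be the fundamental unit of $\mathbb{Q}(\sqrt{pq})$ (so $a^2 - pq b^2 = 1$). Then neither $a+1$ nor $a-1$ is a perfect square. -/
/-- Let `p ≡ 5 (mod 8)` and `q ≡ 7 (mod 8)` be primes, and let `ε_pq = a + b√(pq)` be the
fundamental unit of `ℚ(√(pq))`, with `a² - pq b² = 1`. Then neither `a + 1` nor `a - 1` is a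
perfect square. -/
theorem stmt_8 (p q : ℕ) (hp : p.Prime) (hq : q.Prime)
    (hp8 : p % 8 = 5) (hq8 : q % 8 = 7)
    (a b : ℕ) (ha : 0 < a) (hb : 0 < b) (hab : a ^ 2 = p * q * b ^ 2 + 1)
    (hfund : ∀ a' b' : ℕ, 0 < a' → 0 < b' → a' ^ 2 = p * q * b' ^ 2 + 1 → a ≤ a') :
    ¬ IsSquare (a + 1) ∧ ¬ IsSquare (a - 1) := by
  haveI : Fact p.Prime := ⟨hp⟩
  have hp2 : p ≠ 2 := by omega
  have hp3 : 3 ≤ p := hp.two_le.lt_of_ne (Ne.symm hp2)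
  have hpq : p ≠ q := by omega
  have hb0 : b ≠ 0 := hb.ne'
  have hqb0 : q * b ^ 2 ≠ 0 := Nat.mul_ne_zero hq.pos.ne' (pow_ne_zero 2 hb0)
  have hRHS0 : p * (q * b ^ 2) ≠ 0 := Nat.mul_ne_zero hp.pos.ne' hqb0
  have ha2 : 2 ≤ a := by
    by_contra h
    push_neg at h
    interval_cases a
    have hpos : 0 < p * q * b ^ 2 :=
      Nat.mul_pos (Nat.mul_pos hp.pos hq.pos) (pow_pos hb 2)
    simp at hab
    have := hp.pos; have := hq.pos
    omega
  have hprod : (a - 1) * (a + 1) = p * (q * b ^ 2) := by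
    have hz : (a : ℤ) ^ 2 = p * q * b ^ 2 + 1 := by exact_mod_cast hab
    have h1 : 1 ≤ a := by omega
    zify [h1]
    linear_combination hz
  -- valuation of the right-hand side at p is odd
  have hR : (p * (q * b ^ 2)).factorization p = 1 + 2 * b.factorization p := by
    rw [Nat.factorization_mul hp.ne_zero hqb0,
      Nat.factorization_mul hq.ne_zero (pow_ne_zero 2 hb0), Nat.factorization_pow]
    have h1 : p.factorization p = 1 := hp.factorization_self
    have h2 : q.factorization p = 0 :=
      Nat.factorization_eq_zero_of_not_dvd (fun h => hpq ((Nat.prime_dvd_prime_iff_eq hp hq).mp h))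
    simp [h1, h2]
  -- if x * y = p*q*b², y a perfect square, p ∤ x, then p ∤ y (valuation parity)
  have key : ∀ x y c : ℕ, x ≠ 0 → x * y = p * (q * b ^ 2) → y = c * c → ¬ p ∣ x → ¬ p ∣ y := by
    intro x y c hx hxy hc hpx _
    have hy0 : y ≠ 0 := fun h => hRHS0 (by rw [← hxy, h, mul_zero])
    have hc0 : c ≠ 0 := by rintro rfl; simp at hc; exact hy0 hc
    have := congrArg (fun n => n.factorization p) hxy
    rw [Nat.factorization_mul hx hy0, hR] at this
    have hxz : x.factorization p = 0 := Nat.factorization_eq_zero_of_not_dvd hpx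
    have hyz : y.factorization p = 2 * c.factorization p := by
      rw [hc, Nat.factorization_mul hc0 hc0]
      simp [Finsupp.add_apply, two_mul]
    simp only [Finsupp.add_apply, hxz, hyz] at this
    omega
  have hdvd : p ∣ (a - 1) * (a + 1) := by rw [hprod]; exact Dvd.intro _ rfl
  constructor
  · rintro ⟨c, hc⟩
    rcases hp.dvd_mul.mp hdvd with h1 | h2
    · -- p ∣ a - 1, so c² ≡ 2 mod p, impossible since p ≡ 5 (mod 8)
      have hcast : ((a - 1 : ℕ) : ZMod p) = 0 := (ZMod.natCast_eq_zero_iff _ _).mpr h1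
      have hn : c * c = (a - 1) + 2 := by rw [← hc]; omega
      have hzm := congrArg (fun n : ℕ => (n : ZMod p)) hn
      push_cast at hzm
      rw [hcast, zero_add] at hzm
      have hsq : IsSquare (2 : ZMod p) := ⟨c, hzm.symm⟩
      rw [ZMod.exists_sq_eq_two_iff hp2] at hsq
      omega
    · -- p ∣ a + 1 = c², valuation contradiction
      have hne : ¬ p ∣ (a - 1) := by
        intro h1
        have hd2 : p ∣ 2 := by
          simpa [show a + 1 - (a - 1) = 2 by omega] using Nat.dvd_sub h2 h1
        exact absurd (Nat.le_of_dvd (by norm_num) hd2) (by omega)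
      exact key (a - 1) (a + 1) c (by omega) hprod hc hne h2
  · rintro ⟨c, hc⟩
    rcases hp.dvd_mul.mp hdvd with h1 | h2
    · -- p ∣ a - 1 = c², valuation contradiction
      have hne : ¬ p ∣ (a + 1) := by
        intro h2
        have hd2 : p ∣ 2 := by
          simpa [show a + 1 - (a - 1) = 2 by omega] using Nat.dvd_sub h2 h1
        exact absurd (Nat.le_of_dvd (by norm_num) hd2) (by omega)
      have hprod' : (a + 1) * (a - 1) = p * (q * b ^ 2) := by rw [mul_comm]; exact hprod
      exact key (a + 1) (a - 1) c (by omega) hprod' hc hne h1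
    · -- p ∣ a + 1, so c² ≡ -2 mod p, impossible since p ≡ 5 (mod 8)
      have hcast : ((a + 1 : ℕ) : ZMod p) = 0 := (ZMod.natCast_eq_zero_iff _ _).mpr h2
      have hn : c * c + 2 = a + 1 := by rw [← hc]; omega
      have hzm := congrArg (fun n : ℕ => (n : ZMod p)) hn
      push_cast at hzm hcast
      have hsq : IsSquare (-2 : ZMod p) := ⟨c, by linear_combination -hzm - hcast⟩
      rw [ZMod.exists_sq_eq_neg_two_iff hp2] at hsq
      omega
end

section
/- Let $p$ and $q$ be primes with $p \equiv 5 \pmod 8$ and $q \equiv 7 \pmod 8$, and suppose $x, y$ are positive integers with $x^2 - 2pq y^2 = 1$. If $x$ is the smallest such positive integer (i.e., $x + y\sqrt{2pq}$ is the fundamental solution), then neither $x+1$ nor $x-1$ is a perfect square. -/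
/-- Key valuation lemma: if `t² * m = p * q * c²` with `p ≠ q` primes and everything
nonzero, then `p ∣ m`, by parity of the `p`-adic valuation. -/
lemma stmt9_core (p q : ℕ) (hp : p.Prime) (hq : q.Prime) (hpq : p ≠ q)
    (t m c : ℕ) (ht : t ≠ 0) (hm : m ≠ 0) (hc : c ≠ 0)
    (h : t ^ 2 * m = p * q * c ^ 2) : p ∣ m := by
  by_contra hpm
  haveI : Fact p.Prime := ⟨hp⟩
  haveI : Fact q.Prime := ⟨hq⟩
  have h1 : padicValNat p (t ^ 2 * m) = padicValNat p (p * q * c ^ 2) := by rw [h]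
  rw [padicValNat.mul (pow_ne_zero 2 ht) hm,
      padicValNat.mul (mul_ne_zero hp.ne_zero hq.ne_zero) (pow_ne_zero 2 hc),
      padicValNat.mul hp.ne_zero hq.ne_zero,
      padicValNat.pow t 2, padicValNat.pow c 2,
      padicValNat.eq_zero_of_not_dvd hpm,
      padicValNat.self hp.one_lt,
      padicValNat.eq_zero_of_not_dvd (fun hd => hpq ((Nat.prime_dvd_prime_iff_eq hp hq).mp hd))]
      at h1
  omega

/-- Let `p ≡ 5 (mod 8)` and `q ≡ 7 (mod 8)` be primes, and let `x, y` be positive integers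
with `x² - 2pq y² = 1`, with `x` smallest possible (fundamental solution of the Pell
equation, giving the fundamental unit `ε_{2pq} = x + y√(2pq)`). Then neither `x + 1` nor
`x - 1` is a perfect square. -/
theorem stmt_9 (p q : ℕ) (hp : p.Prime) (hq : q.Prime)
    (hp8 : p % 8 = 5) (hq8 : q % 8 = 7)
    (x y : ℕ) (hx : 0 < x) (hy : 0 < y) (hxy : x ^ 2 = 2 * p * q * y ^ 2 + 1)
    (hfund : ∀ x' y' : ℕ, 0 < x' → 0 < y' → x' ^ 2 = 2 * p * q * y' ^ 2 + 1 → x ≤ x') :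
    ¬ IsSquare (x + 1) ∧ ¬ IsSquare (x - 1) := by
  haveI : Fact p.Prime := ⟨hp⟩
  have hpq : p ≠ q := fun h => by omega
  have hp2 : p ≠ 2 := fun h => by omega
  have hpodd : Odd p := Nat.odd_iff.mpr (by omega)
  have hqodd : Odd q := Nat.odd_iff.mpr (by omega)
  have h1 : x ^ 2 = 2 * (p * q * y ^ 2) + 1 := by rw [hxy]; ring
  -- x is odd
  have hxodd : x % 2 = 1 := by
    rcases Nat.even_or_odd x with ⟨k, hk⟩ | ⟨k, hk⟩
    · exfalso
      have h2 : x ^ 2 = 2 * (2 * k ^ 2) := by rw [hk]; ring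
      omega
    · omega
  -- x ≥ 3
  have hx3 : 3 ≤ x := by
    by_contra hlt
    have hx1 : x = 1 := by omega
    rw [hx1] at h1
    have h0 := mul_pos (mul_pos hp.pos hq.pos) (pow_pos hy 2)
    norm_num at h1
    omega
  constructor
  · -- x + 1 is not a square
    rintro ⟨s, hs⟩
    -- s is even
    obtain ⟨t, rfl⟩ : ∃ t, s = t + t := by
      rcases Nat.even_or_odd s with ⟨t, ht⟩ | ⟨k, hk⟩
      · exact ⟨t, ht⟩
      · exfalso
        have h2 : (2 * k + 1) * (2 * k + 1) = 2 * (2 * k ^ 2 + 2 * k) + 1 := by ring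
        rw [hk] at hs
        omega
    have hx4 : x + 1 = 4 * t ^ 2 := by rw [hs]; ring
    have ht2 : 0 < t ^ 2 := by
      rcases Nat.eq_zero_or_pos t with rfl | htpos
      · exfalso; norm_num at hx4
      · positivity
    -- set m = 2t² - 1, so x = 2m + 1
    obtain ⟨m, hm⟩ : ∃ m, 2 * t ^ 2 = m + 1 := ⟨2 * t ^ 2 - 1, by omega⟩
    have hm1 : 1 ≤ m := by omega
    have hxm : x = 2 * m + 1 := by omega
    rw [hxm] at h1
    -- p q y² = 2 m (m+1)
    have h2 : (2 * m + 1) ^ 2 = 2 * (2 * (m ^ 2 + m)) + 1 := by ring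
    have e0 : p * q * y ^ 2 = 2 * (m ^ 2 + m) := by omega
    -- y is even
    obtain ⟨c, rfl⟩ : ∃ c, y = c + c := by
      rcases Nat.even_or_odd y with ⟨c, hc⟩ | hoy
      · exact ⟨c, hc⟩
      · exfalso
        have hodd : Odd (p * q * y ^ 2) := (hpodd.mul hqodd).mul (hoy.pow)
        rw [Nat.odd_iff] at hodd
        omega
    have h3 : p * q * (c + c) ^ 2 = 4 * (p * q * c ^ 2) := by ring
    have e2 : 2 * (p * q * c ^ 2) = m ^ 2 + m := by omega
    have h4 : m ^ 2 + m = m * (m + 1) := by ring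
    have h5 : m * (2 * t ^ 2) = 2 * (t ^ 2 * m) := by ring
    rw [hm] at h5
    have key2 : t ^ 2 * m = p * q * c ^ 2 := by omega
    have hc0 : c ≠ 0 := by
      rintro rfl
      have hz : p * q * 0 ^ 2 = 0 := by ring
      rw [hz] at key2
      rcases Nat.mul_eq_zero.mp key2 with h | h
      · omega
      · omega
    have hdvd : p ∣ m :=
      stmt9_core p q hp hq hpq t m c (by rintro rfl; simp at ht2) (by omega) hc0 key2
    -- 2 is a square mod p: contradiction with p ≡ 5 (mod 8)
    have hsq : IsSquare (2 : ZMod p) := by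
      refine ⟨2 * (t : ZMod p), ?_⟩
      have hcast : ((m : ℕ) : ZMod p) = 0 := (ZMod.natCast_eq_zero_iff _ _).mpr hdvd
      have hcast2 : (2 : ZMod p) * (t : ZMod p) ^ 2 = (m : ZMod p) + 1 := by
        have := congrArg (Nat.cast : ℕ → ZMod p) hm
        push_cast at this
        exact this
      rw [hcast] at hcast2
      linear_combination (-2) * hcast2
    rw [ZMod.exists_sq_eq_two_iff hp2] at hsq
    omega
  · -- x - 1 is not a square
    rintro ⟨s, hs⟩
    obtain ⟨t, rfl⟩ : ∃ t, s = t + t := by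
      rcases Nat.even_or_odd s with ⟨t, ht⟩ | ⟨k, hk⟩
      · exact ⟨t, ht⟩
      · exfalso
        have h2 : (2 * k + 1) * (2 * k + 1) = 2 * (2 * k ^ 2 + 2 * k) + 1 := by ring
        rw [hk] at hs
        omega
    have hx4 : x - 1 = 4 * t ^ 2 := by rw [hs]; ring
    have hxm : x = 4 * t ^ 2 + 1 := by omega
    have ht2 : 0 < t ^ 2 := by
      rcases Nat.eq_zero_or_pos t with rfl | htpos
      · exfalso; norm_num at hxm; omega
      · positivity
    rw [hxm] at h1
    have h2 : (4 * t ^ 2 + 1) ^ 2 = 2 * (2 * (4 * (t ^ 2) ^ 2 + 2 * t ^ 2)) + 1 := by ring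
    have e0 : p * q * y ^ 2 = 2 * (4 * (t ^ 2) ^ 2 + 2 * t ^ 2) := by omega
    obtain ⟨c, rfl⟩ : ∃ c, y = c + c := by
      rcases Nat.even_or_odd y with ⟨c, hc⟩ | hoy
      · exact ⟨c, hc⟩
      · exfalso
        have hodd : Odd (p * q * y ^ 2) := (hpodd.mul hqodd).mul (hoy.pow)
        rw [Nat.odd_iff] at hodd
        omega
    have h3 : p * q * (c + c) ^ 2 = 4 * (p * q * c ^ 2) := by ring
    have e2 : 2 * (p * q * c ^ 2) = 4 * (t ^ 2) ^ 2 + 2 * t ^ 2 := by omega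
    have h4 : t ^ 2 * (2 * t ^ 2 + 1) = 2 * (t ^ 2) ^ 2 + t ^ 2 := by ring
    have key2 : t ^ 2 * (2 * t ^ 2 + 1) = p * q * c ^ 2 := by omega
    have hc0 : c ≠ 0 := by
      rintro rfl
      have hz : p * q * 0 ^ 2 = 0 := by ring
      rw [hz] at key2
      rcases Nat.mul_eq_zero.mp key2 with h | h
      · omega
      · omega
    have hdvd : p ∣ 2 * t ^ 2 + 1 :=
      stmt9_core p q hp hq hpq t _ c (by rintro rfl; simp at ht2) (by omega) hc0 key2
    have hsq : IsSquare (-2 : ZMod p) := by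
      refine ⟨2 * (t : ZMod p), ?_⟩
      have hcast : ((2 * t ^ 2 + 1 : ℕ) : ZMod p) = 0 :=
        (ZMod.natCast_eq_zero_iff _ _).mpr hdvd
      push_cast at hcast
      linear_combination (-2) * hcast
    rw [ZMod.exists_sq_eq_neg_two_iff hp2] at hsq
    omega
end

section
/- Let $q_1, q_2$ be primes with $q_1 \equiv 3 \pmod 8$ and $q_2 \equiv 7 \pmod 8$, and let $a, b$ be positive integers with $a^2 - q_1 q_2 b^2 = 1$ giving the fundamental unit $a + b\sqrt{q_1 q_2}$ of $\mathbb{Q}(\sqrt{q_1 q_2})$. Then neither $a+1$ nor $a-1$ is a perfect square. -/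
/-- Auxiliary: if `x² * y = p * m * b²` with `p` prime not dividing `m` and `b ≠ 0`,
then `p ∣ y` (by a `p`-adic valuation parity argument). -/
lemma aux_dvd (p m x y b : ℕ) (hp : p.Prime) (hpm : ¬ p ∣ m) (hb : b ≠ 0)
    (h : x ^ 2 * y = p * m * b ^ 2) : p ∣ y := by
  have hm : m ≠ 0 := by rintro rfl; exact hpm (dvd_zero p)
  have hrhs : p * m * b ^ 2 ≠ 0 :=
    mul_ne_zero (mul_ne_zero hp.ne_zero hm) (pow_ne_zero 2 hb)
  have hx : x ≠ 0 := by
    rintro rfl; rw [show (0 : ℕ) ^ 2 * y = 0 by ring] at h; exact hrhs h.symm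
  have hy : y ≠ 0 := by
    rintro rfl; rw [mul_zero] at h; exact hrhs h.symm
  have hfac := congrArg (fun n => n.factorization p) h
  simp only [Nat.factorization_mul (pow_ne_zero 2 hx) hy,
    Nat.factorization_mul (mul_ne_zero hp.ne_zero hm) (pow_ne_zero 2 hb),
    Nat.factorization_mul hp.ne_zero hm, Nat.factorization_pow,
    Finsupp.add_apply, Finsupp.smul_apply, smul_eq_mul] at hfac
  have hpp : p.factorization p = 1 := hp.factorization_self
  have hpm0 : m.factorization p = 0 := Nat.factorization_eq_zero_of_not_dvd hpm
  rw [hpp, hpm0] at hfac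
  have : y.factorization p ≠ 0 := by omega
  exact Nat.dvd_of_factorization_pos this

/-- Let `q₁ ≡ 3 (mod 8)` and `q₂ ≡ 7 (mod 8)` be primes, and let `a + b√(q₁q₂)` be the
fundamental unit of `ℚ(√(q₁q₂))`, with `a, b` positive integers and `a² - q₁q₂ b² = 1`.
Then neither `a + 1` nor `a - 1` is a perfect square. -/
theorem stmt_10 (q₁ q₂ : ℕ) (hq₁ : q₁.Prime) (hq₂ : q₂.Prime)
    (hq₁8 : q₁ % 8 = 3) (hq₂8 : q₂ % 8 = 7)
    (a b : ℕ) (ha : 0 < a) (hb : 0 < b) (hab : a ^ 2 = q₁ * q₂ * b ^ 2 + 1)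
    (hfund : ∀ a' b' : ℕ, 0 < a' → 0 < b' → a' ^ 2 = q₁ * q₂ * b' ^ 2 + 1 → a ≤ a') :
    ¬ IsSquare (a + 1) ∧ ¬ IsSquare (a - 1) := by
  have hne : q₁ ≠ q₂ := by omega
  have hq1q2 : ¬ q₁ ∣ q₂ := fun hd => hne ((Nat.prime_dvd_prime_iff_eq hq₁ hq₂).mp hd)
  have hq2q1 : ¬ q₂ ∣ q₁ := fun hd => hne.symm ((Nat.prime_dvd_prime_iff_eq hq₂ hq₁).mp hd)
  have hq₁2 : q₁ ≠ 2 := by omega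
  have hq₂2 : q₂ ≠ 2 := by omega
  have ha1 : 1 ≤ a := ha
  have key : (a + 1) * (a - 1) = q₁ * q₂ * b ^ 2 := by
    have h2 : (a + 1) * (a - 1) + 1 = a ^ 2 := by
      cases' a with a'; · omega
      simp [Nat.succ_sub_one]; ring
    omega
  haveI : Fact q₁.Prime := ⟨hq₁⟩
  haveI : Fact q₂.Prime := ⟨hq₂⟩
  constructor
  · rintro ⟨c, hc⟩
    -- a + 1 = c * c, so c² * (a-1) = q₁q₂b², hence q₁ ∣ a - 1 = c² - 2
    have heq : c ^ 2 * (a - 1) = q₁ * q₂ * b ^ 2 := by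
      rw [← key, hc]; ring
    have hdvd : q₁ ∣ a - 1 := aux_dvd q₁ q₂ c (a - 1) b hq₁ hq1q2 hb.ne' heq
    have hcc : c * c = (a - 1) + 2 := by omega
    -- in ZMod q₁ : c² = 2, contradicting 2 being a nonresidue
    have hsq : IsSquare (2 : ZMod q₁) := by
      refine ⟨(c : ZMod q₁), ?_⟩
      have h0 : ((a - 1 : ℕ) : ZMod q₁) = 0 :=
        (ZMod.natCast_eq_zero_iff _ _).mpr hdvd
      have hthis : ((c * c : ℕ) : ZMod q₁) = (((a - 1) + 2 : ℕ) : ZMod q₁) := by rw [hcc]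
      rw [Nat.cast_add, h0] at hthis
      push_cast at hthis
      linear_combination -hthis
    rw [ZMod.exists_sq_eq_two_iff hq₁2] at hsq
    omega
  · rintro ⟨c, hc⟩
    -- a - 1 = c * c, so c² * (a+1) = q₁q₂b², hence q₂ ∣ a + 1 = c² + 2
    have heq : c ^ 2 * (a + 1) = q₂ * q₁ * b ^ 2 := by
      rw [show q₂ * q₁ * b ^ 2 = q₁ * q₂ * b ^ 2 by ring, ← key, hc]; ring
    have hdvd : q₂ ∣ a + 1 := aux_dvd q₂ q₁ c (a + 1) b hq₂ hq2q1 hb.ne' heq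
    have hcc : c * c + 2 = a + 1 := by omega
    have hsq : IsSquare (-2 : ZMod q₂) := by
      refine ⟨(c : ZMod q₂), ?_⟩
      have h0 : ((a + 1 : ℕ) : ZMod q₂) = 0 :=
        (ZMod.natCast_eq_zero_iff _ _).mpr hdvd
      have hthis : ((c * c + 2 : ℕ) : ZMod q₂) = ((a + 1 : ℕ) : ZMod q₂) := by rw [hcc]
      rw [h0] at hthis
      push_cast at hthis
      linear_combination -hthis
    rw [ZMod.exists_sq_eq_neg_two_iff hq₂2] at hsq
    omega
end
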